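/- For every nonzero complex number λ, the 2×2 matrix [[0,1],[λ,0]] is congruent to [[0,1],[λ⁻¹,0]]. -/

import Mathlib

open Matrix

/-- Matrix congruence: `A ≡_c B` iff `A = Pᵀ * B * P` for some invertible `P`. -/
def MatrixCongruent {n : ℕ} (A B : Matrix (Fin n) (Fin n) ℂ) : Prop :=
  ∃ P : Matrix (Fin n) (Fin n) ℂ, IsUnit P ∧ A = Pᵀ * B * P

/-- For every nonzero `lam : ℂ`, the matrix `[[0,1],[lam,0]]` is congruent to
`[[0,1],[lam⁻¹,0]]`. -/
theorem H2_congruent_inv (lam : ℂ) (hlam : lam ≠ 0) :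
    MatrixCongruent !![0, 1; lam, 0] !![0, 1; lam⁻¹, 0] := by
  refine ⟨!![0, 1; lam, 0], ?_, ?_⟩
  · rw [Matrix.isUnit_iff_isUnit_det, Matrix.det_fin_two_of]
    simpa using hlam
  · ext i j
    fin_cases i <;> fin_cases j <;>
      simp [Matrix.mul_apply, Fin.sum_univ_two, Matrix.transpose_apply, Matrix.vecHead, Matrix.vecTail] <;>
      field_simp
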